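/- Let V be a right Banach ℍ-module and T ∈ B(V). If q ∈ σ_S(T) is a right eigenvalue of finite type of T, then q ∉ σ_e^S(T). -/

import Mathlib

/-!
Quaternionic setting: `ℍ` is the real quaternions.  A right Banach `ℍ`-module is
formalized as a real Banach space `V` together with a compatible `Module ℍᵐᵒᵖ V`
structure (right `ℍ`-action) satisfying `‖x • q‖ = ‖x‖ * |q|`; bounded right
`ℍ`-linear operators are the continuous `ℍᵐᵒᵖ`-linear maps `V →L[ℍᵐᵒᵖ] V`.
-/

open MulOpposite

notation "ℍ" => Quaternion ℝ

section Defs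

variable {W : Type*} [NormedAddCommGroup W] [Module ℍᵐᵒᵖ W] [Module ℝ W]
  [SMulCommClass ℍᵐᵒᵖ ℝ W] [ContinuousConstSMul ℝ W]

/-- `Q_q(T) = T² − 2 Re(q) T + |q|² I`. -/
noncomputable def Qs (T : W →L[ℍᵐᵒᵖ] W) (q : ℍ) : W →L[ℍᵐᵒᵖ] W :=
  T * T - (2 * q.re) • T + (‖q‖ ^ 2) • (1 : W →L[ℍᵐᵒᵖ] W)

/-- The S-resolvent set: `q` such that `Q_q(T)` is bijective with bounded inverse,
i.e. invertible in the ring `B(W)`. -/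
noncomputable def sResolvent (T : W →L[ℍᵐᵒᵖ] W) : Set ℍ :=
  {q | IsUnit (Qs T q)}

/-- The S-spectrum `σ_S(T) = ℍ \ ρ_S(T)`. -/
noncomputable def sSpectrum (T : W →L[ℍᵐᵒᵖ] W) : Set ℍ :=
  {q | ¬ IsUnit (Qs T q)}

/-- A compact operator: the image of the closed unit ball is relatively compact. -/
def IsCompactOp (K : W →L[ℍᵐᵒᵖ] W) : Prop :=
  IsCompact (closure (⇑K '' Metric.closedBall (0 : W) 1))

/-- `S` is a quasi-inverse of `T` if `S T = I - K₁` and `T S = I - K₂` with `K₁, K₂` compact. -/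
def IsQuasiInverse (S T : W →L[ℍᵐᵒᵖ] W) : Prop :=
  ∃ K₁ K₂ : W →L[ℍᵐᵒᵖ] W, IsCompactOp K₁ ∧ IsCompactOp K₂ ∧
    S * T = 1 - K₁ ∧ T * S = 1 - K₂

/-- The essential S-spectrum: `q` such that `Q_q(T)` admits no quasi-inverse. -/
noncomputable def essSpectrum (T : W →L[ℍᵐᵒᵖ] W) : Set ℍ :=
  {q | ¬ ∃ S : W →L[ℍᵐᵒᵖ] W, IsQuasiInverse S (Qs T q)}

/-- The Weyl S-spectrum: `⋂ σ_S(T + K)` over all compact `K`. -/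
noncomputable def weylSpectrum (T : W →L[ℍᵐᵒᵖ] W) : Set ℍ :=
  ⋂ K ∈ {K : W →L[ℍᵐᵒᵖ] W | IsCompactOp K}, sSpectrum (T + K)

/-- The 2-sphere `[q] = {h q h⁻¹ : h ∈ ℍ \ {0}}`. -/
def qSphere (q : ℍ) : Set ℍ := {p | ∃ h : ℍ, h ≠ 0 ∧ p = h * q * h⁻¹}

/-- Minimum modulus `μ(T) = inf {‖T x‖ : ‖x‖ = 1}`. -/
noncomputable def muMin (T : W →L[ℍᵐᵒᵖ] W) : ℝ :=
  sInf {c : ℝ | ∃ x : W, ‖x‖ = 1 ∧ c = ‖T x‖}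

/-- Operator norm of a bounded right `ℍ`-linear operator. -/
noncomputable def opNorm (T : W →L[ℍᵐᵒᵖ] W) : ℝ :=
  sInf {c : ℝ | 0 ≤ c ∧ ∀ x : W, ‖T x‖ ≤ c * ‖x‖}

/-- Restriction of `T` to an invariant submodule. -/
noncomputable def restrictOp (T : W →L[ℍᵐᵒᵖ] W) (M : Submodule ℍᵐᵒᵖ W)
    (h : ∀ x ∈ M, T x ∈ M) : ↥M →L[ℍᵐᵒᵖ] ↥M where
  toLinearMap := (T : W →ₗ[ℍᵐᵒᵖ] W).restrict h
  cont := Continuous.subtype_mk (T.continuous.comp continuous_subtype_val) _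

end Defs

section Sub

variable {V : Type*} [NormedAddCommGroup V] [NormedSpace ℝ V]
  [Module ℍᵐᵒᵖ V] [IsScalarTower ℝ ℍᵐᵒᵖ V] [SMulCommClass ℍᵐᵒᵖ ℝ V]

instance (M : Submodule ℍᵐᵒᵖ V) : SMulCommClass ℍᵐᵒᵖ ℝ ↥M := by
  constructor
  intro q r x
  apply Subtype.ext
  simp only [Submodule.coe_smul_of_tower, SetLike.val_smul]
  exact smul_comm q r (x : V)

instance (M : Submodule ℍᵐᵒᵖ V) : ContinuousConstSMul ℝ ↥M := by
  constructor
  intro r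
  have h : Continuous fun x : ↥M => r • (x : V) :=
    (continuous_const_smul r).comp continuous_subtype_val
  exact Continuous.subtype_mk h _

/-- `q` is a right eigenvalue of finite type of `T`: `V` is the direct sum of two closed
`T`-invariant right `ℍ`-submodules `M₁`, `M₂` with `M₁` finite-dimensional over `ℍ`,
`σ_S(T|M₁) ∩ σ_S(T|M₂) = ∅` and `σ_S(T|M₁) = [q]`. -/
noncomputable def IsFiniteTypeEigenvalue (T : V →L[ℍᵐᵒᵖ] V) (q : ℍ) : Prop :=
  ∃ (M₁ M₂ : Submodule ℍᵐᵒᵖ V) (h₁ : ∀ x ∈ M₁, T x ∈ M₁) (h₂ : ∀ x ∈ M₂, T x ∈ M₂),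
    IsClosed (M₁ : Set V) ∧ IsClosed (M₂ : Set V) ∧ IsCompl M₁ M₂ ∧
    FiniteDimensional ℍᵐᵒᵖ ↥M₁ ∧
    sSpectrum (restrictOp T M₁ h₁) ∩ sSpectrum (restrictOp T M₂ h₂) = ∅ ∧
    sSpectrum (restrictOp T M₁ h₁) = qSphere q

end Sub

section AuxLemmas

variable {V : Type*} [NormedAddCommGroup V] [NormedSpace ℝ V]
  [Module ℍᵐᵒᵖ V] [IsScalarTower ℝ ℍᵐᵒᵖ V] [SMulCommClass ℍᵐᵒᵖ ℝ V]

@[simp] lemma restrictOp_coe (T : V →L[ℍᵐᵒᵖ] V) (M : Submodule ℍᵐᵒᵖ V)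
    (h : ∀ x ∈ M, T x ∈ M) (x : ↥M) : ((restrictOp T M h) x : V) = T ↑x := rfl

lemma qs_mem (T : V →L[ℍᵐᵒᵖ] V) (q : ℍ) (M : Submodule ℍᵐᵒᵖ V)
    (h : ∀ x ∈ M, T x ∈ M) : ∀ x ∈ M, Qs T q x ∈ M := by
  intro x hx
  simp only [Qs, ContinuousLinearMap.add_apply, ContinuousLinearMap.sub_apply,
    ContinuousLinearMap.mul_apply, ContinuousLinearMap.smul_apply,
    ContinuousLinearMap.one_apply]
  exact M.add_mem (M.sub_mem (h _ (h _ hx)) (M.smul_of_tower_mem _ (h _ hx)))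
    (M.smul_of_tower_mem _ hx)

lemma qs_restrict (T : V →L[ℍᵐᵒᵖ] V) (q : ℍ) (M : Submodule ℍᵐᵒᵖ V)
    (h : ∀ x ∈ M, T x ∈ M) :
    restrictOp (Qs T q) M (qs_mem T q M h) = Qs (restrictOp T M h) q := by
  ext m
  simp only [restrictOp_coe, Qs, ContinuousLinearMap.add_apply,
    ContinuousLinearMap.sub_apply, ContinuousLinearMap.mul_apply,
    ContinuousLinearMap.smul_apply, ContinuousLinearMap.one_apply,
    Submodule.coe_add, Submodule.coe_sub, Submodule.coe_smul_of_tower]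

lemma qs_coe (T : V →L[ℍᵐᵒᵖ] V) (q : ℍ) (M : Submodule ℍᵐᵒᵖ V)
    (h : ∀ x ∈ M, T x ∈ M) (m : ↥M) :
    Qs T q ↑m = ↑(Qs (restrictOp T M h) q m) := by
  have := congrArg (fun f : ↥M →L[ℍᵐᵒᵖ] ↥M => ((f m : ↥M) : V)) (qs_restrict T q M h)
  simpa using this

lemma isCompl_restrict {M₁ M₂ : Submodule ℍᵐᵒᵖ V} (hc : IsCompl M₁ M₂) :
    IsCompl (M₁.restrictScalars ℝ) (M₂.restrictScalars ℝ) := by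
  constructor
  · rw [Submodule.disjoint_def]
    have h1 := hc.disjoint
    rw [Submodule.disjoint_def] at h1
    exact fun x hx hx' => h1 x hx hx'
  · rw [codisjoint_iff, eq_top_iff]
    intro x _
    have hx : x ∈ M₁ ⊔ M₂ := by rw [hc.sup_eq_top]; trivial
    obtain ⟨y, hy, z, hz, rfl⟩ := Submodule.mem_sup.mp hx
    exact Submodule.add_mem_sup (show y ∈ M₁.restrictScalars ℝ from hy)
      (show z ∈ M₂.restrictScalars ℝ from hz)

end AuxLemmas

set_option maxHeartbeats 1000000 in
theorem stmt4 {V : Type*} [NormedAddCommGroup V] [NormedSpace ℝ V] [CompleteSpace V]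
    [Module ℍᵐᵒᵖ V] [IsScalarTower ℝ ℍᵐᵒᵖ V] [SMulCommClass ℍᵐᵒᵖ ℝ V]
    (hnorm : ∀ (x : V) (q : ℍ), ‖op q • x‖ = ‖x‖ * ‖q‖)
    (T : V →L[ℍᵐᵒᵖ] V) (q : ℍ) (hq : q ∈ sSpectrum T)
    (hft : IsFiniteTypeEigenvalue T q) :
    q ∉ essSpectrum T := by
  classical
  obtain ⟨M₁, M₂, h₁, h₂, hcl₁, hcl₂, hc, hfin, hdisj, hsph⟩ := hft
  -- `q` is in the S-spectrum of `T|M₁`, hence not in that of `T|M₂`.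
  have hqM1 : q ∈ sSpectrum (restrictOp T M₁ h₁) := by
    rw [hsph]; exact ⟨1, one_ne_zero, by simp⟩
  have hqM2 : IsUnit (Qs (restrictOp T M₂ h₂) q) := by
    by_contra h
    have : q ∈ sSpectrum (restrictOp T M₁ h₁) ∩ sSpectrum (restrictOp T M₂ h₂) := ⟨hqM1, h⟩
    rw [hdisj] at this
    exact this
  obtain ⟨u, hu⟩ := hqM2
  -- real scalar restrictions
  set N₁ := M₁.restrictScalars ℝ with hN₁def
  set N₂ := M₂.restrictScalars ℝ with hN₂def
  have hcR : IsCompl N₁ N₂ := isCompl_restrict hc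
  haveI : CompleteSpace ↥N₁ := hcl₁.completeSpace_coe
  haveI : CompleteSpace ↥N₂ := hcl₂.completeSpace_coe
  -- the continuous linear equivalence `↥N₁ × ↥N₂ ≃ V`
  set e : (↥N₁ × ↥N₂) →L[ℝ] V := N₁.subtypeL.coprod N₂.subtypeL with hedef
  have heapp : ∀ p : ↥N₁ × ↥N₂, e p = ↑p.1 + ↑p.2 := fun p => rfl
  have hker : LinearMap.ker (e : (↥N₁ × ↥N₂) →ₗ[ℝ] V) = ⊥ := by
    rw [LinearMap.ker_eq_bot']
    rintro ⟨a, b⟩ hab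
    have hab' : (↑a + ↑b : V) = 0 := hab
    have haval : (a : V) = -(b : V) := by
      rw [eq_neg_iff_add_eq_zero]; exact hab'
    have haN₂ : (a : V) ∈ N₂ := haval ▸ N₂.neg_mem b.2
    have hdisj' := hcR.disjoint
    rw [Submodule.disjoint_def] at hdisj'
    have ha0 : (a : V) = 0 := hdisj' _ a.2 haN₂
    have hb0 : (b : V) = 0 := by
      have := hab'; rw [ha0, zero_add] at this; exact this
    exact Prod.ext (Subtype.ext ha0) (Subtype.ext hb0)
  have hrange : LinearMap.range (e : (↥N₁ × ↥N₂) →ₗ[ℝ] V) = ⊤ := by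
    rw [eq_top_iff]
    intro x _
    have hx : x ∈ M₁ ⊔ M₂ := by rw [hc.sup_eq_top]; trivial
    obtain ⟨y, hy, z, hz, rfl⟩ := Submodule.mem_sup.mp hx
    exact ⟨(⟨y, hy⟩, ⟨z, hz⟩), rfl⟩
  set ee := ContinuousLinearEquiv.ofBijective e hker hrange with heedef
  have hdec : ∀ x : V, (↑((ee.symm x).1) + ↑((ee.symm x).2) : V) = x := by
    intro x
    have := ee.apply_symm_apply x
    rw [show ee (ee.symm x) = e (ee.symm x) from rfl] at this
    simpa [heapp] using this
  -- the `ℍᵐᵒᵖ`-linear projections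
  set P₁ₗ := M₁.linearProjOfIsCompl M₂ hc with hP₁def
  set P₂ₗ := M₂.linearProjOfIsCompl M₁ hc.symm with hP₂def
  have hP₁val : ∀ x : V, (P₁ₗ x : V) = ↑((ee.symm x).1) := by
    intro x
    conv_lhs => rw [← hdec x]
    rw [map_add]
    have ha : ((ee.symm x).1 : V) ∈ M₁ := (ee.symm x).1.2
    have hb : ((ee.symm x).2 : V) ∈ M₂ := (ee.symm x).2.2
    rw [show P₁ₗ ((ee.symm x).2 : V) = 0 from Submodule.projectionOnto_apply_of_mem_right hc hb,
      show P₁ₗ ((ee.symm x).1 : V) = ⟨_, ha⟩ from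
        Submodule.linearProjOfIsCompl_apply_left hc ⟨_, ha⟩]
    simp
  have hP₂val : ∀ x : V, (P₂ₗ x : V) = ↑((ee.symm x).2) := by
    intro x
    conv_lhs => rw [← hdec x]
    rw [map_add]
    have ha : ((ee.symm x).1 : V) ∈ M₁ := (ee.symm x).1.2
    have hb : ((ee.symm x).2 : V) ∈ M₂ := (ee.symm x).2.2
    rw [show P₂ₗ ((ee.symm x).1 : V) = 0 from Submodule.projectionOnto_apply_of_mem_right hc.symm ha,
      show P₂ₗ ((ee.symm x).2 : V) = ⟨_, hb⟩ from
        Submodule.linearProjOfIsCompl_apply_left hc.symm ⟨_, hb⟩]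
    simp
  have hcont₁ : Continuous fun x : V => P₁ₗ x := by
    have h1 : Continuous fun x : V => ((ee.symm x).1 : V) :=
      continuous_subtype_val.comp (continuous_fst.comp ee.symm.continuous)
    have h2 : Continuous fun x : V => (P₁ₗ x : V) := by
      simpa only [← hP₁val] using h1
    exact h2.subtype_mk _
  have hcont₂ : Continuous fun x : V => P₂ₗ x := by
    have h1 : Continuous fun x : V => ((ee.symm x).2 : V) :=
      continuous_subtype_val.comp (continuous_snd.comp ee.symm.continuous)
    have h2 : Continuous fun x : V => (P₂ₗ x : V) := by
      simpa only [← hP₂val] using h1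
    exact h2.subtype_mk _
  set P₁ : V →L[ℍᵐᵒᵖ] ↥M₁ := ⟨P₁ₗ, hcont₁⟩ with hP₁
  set P₂ : V →L[ℍᵐᵒᵖ] ↥M₂ := ⟨P₂ₗ, hcont₂⟩ with hP₂
  set incl₁ : ↥M₁ →L[ℍᵐᵒᵖ] V := ⟨M₁.subtype, continuous_subtype_val⟩ with hincl₁
  set incl₂ : ↥M₂ →L[ℍᵐᵒᵖ] V := ⟨M₂.subtype, continuous_subtype_val⟩ with hincl₂
  set K : V →L[ℍᵐᵒᵖ] V := incl₁.comp P₁ with hK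
  set R : ↥M₂ →L[ℍᵐᵒᵖ] ↥M₂ := ↑u⁻¹ with hR
  set S : V →L[ℍᵐᵒᵖ] V := incl₂.comp (R.comp P₂) with hS
  -- compactness of K
  haveI : FiniteDimensional ℝ ℍᵐᵒᵖ :=
    Module.Finite.equiv (MulOpposite.opLinearEquiv ℝ (M := ℍ))
  haveI : FiniteDimensional ℝ ↥M₁ := Module.Finite.trans ℍᵐᵒᵖ ↥M₁
  haveI : FiniteDimensional ℝ ↥N₁ :=
    Module.Finite.equiv (((Submodule.restrictScalarsEquiv ℝ ℍᵐᵒᵖ V M₁).restrictScalars ℝ)).symm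
  set g : V →L[ℝ] ↥N₁ :=
    (ContinuousLinearMap.fst ℝ ↥N₁ ↥N₂).comp (ee.symm : V →L[ℝ] ↥N₁ × ↥N₂) with hg
  have hgval : ∀ x : V, (g x : V) = ↑((ee.symm x).1) := fun x => rfl
  have himg : ⇑K '' Metric.closedBall 0 1 ⊆
      Subtype.val '' Metric.closedBall (0 : ↥N₁) ‖g‖ := by
    rintro _ ⟨x, hx, rfl⟩
    refine ⟨g x, ?_, ?_⟩
    · rw [Metric.mem_closedBall, dist_zero_right]
      calc ‖g x‖ ≤ ‖g‖ * ‖x‖ := g.le_opNorm x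
        _ ≤ ‖g‖ * 1 := by
            have hx1 : ‖x‖ ≤ 1 := by
              rw [Metric.mem_closedBall, dist_zero_right] at hx; exact hx
            exact mul_le_mul_of_nonneg_left hx1 (norm_nonneg g)
        _ = ‖g‖ := mul_one _
    · show (g x : V) = K x
      rw [hgval, show K x = (P₁ₗ x : V) from rfl, hP₁val]
  have hcompK : IsCompactOp K := by
    have hball : IsCompact (Subtype.val '' Metric.closedBall (0 : ↥N₁) ‖g‖) :=
      (isCompact_closedBall _ _).image continuous_subtype_val
    exact IsCompact.of_isClosed_subset hball isClosed_closure
      (closure_minimal himg hball.isClosed)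
  -- algebraic identities
  have hQcoe₁ := qs_coe T q M₁ h₁
  have hQcoe₂ := qs_coe T q M₂ h₂
  have hRQ : ∀ m : ↥M₂, R (Qs (restrictOp T M₂ h₂) q m) = m := by
    intro m
    rw [← hu]
    have h1 : ((↑u⁻¹ * ↑u : ↥M₂ →L[ℍᵐᵒᵖ] ↥M₂)) = 1 := u.inv_mul
    have := DFunLike.congr_fun h1 m
    rwa [ContinuousLinearMap.mul_apply, ContinuousLinearMap.one_apply] at this
  have hQR : ∀ m : ↥M₂, Qs (restrictOp T M₂ h₂) q (R m) = m := by
    intro m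
    rw [← hu]
    have h1 : ((↑u * ↑u⁻¹ : ↥M₂ →L[ℍᵐᵒᵖ] ↥M₂)) = 1 := u.mul_inv
    have := DFunLike.congr_fun h1 m
    rwa [ContinuousLinearMap.mul_apply, ContinuousLinearMap.one_apply] at this
  have hdecM : ∀ x : V, (↑(P₁ₗ x) + ↑(P₂ₗ x) : V) = x :=
    Submodule.projection_add_projection_eq_self hc
  have hP₂sub : ∀ x : V, (↑(P₂ₗ x) : V) = x - ↑(P₁ₗ x) := by
    intro x
    rw [eq_sub_iff_add_eq, add_comm]
    exact hdecM x
  have e2 : ∀ x : V, P₂ₗ (Qs T q x) = Qs (restrictOp T M₂ h₂) q (P₂ₗ x) := by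
    intro x
    have e1 : Qs T q x = ↑(Qs (restrictOp T M₁ h₁) q (P₁ₗ x))
        + ↑(Qs (restrictOp T M₂ h₂) q (P₂ₗ x)) := by
      conv_lhs => rw [← hdecM x]
      rw [map_add, hQcoe₁, hQcoe₂]
    rw [e1, map_add,
      show P₂ₗ ((Qs (restrictOp T M₁ h₁) q (P₁ₗ x) : ↥M₁) : V) = 0 from
        Submodule.projectionOnto_apply_of_mem_right hc.symm
        (Qs (restrictOp T M₁ h₁) q (P₁ₗ x)).2,
      show P₂ₗ ((Qs (restrictOp T M₂ h₂) q (P₂ₗ x) : ↥M₂) : V)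
          = Qs (restrictOp T M₂ h₂) q (P₂ₗ x) from
        Submodule.linearProjOfIsCompl_apply_left hc.symm _,
      zero_add]
  have hSQ : S * Qs T q = 1 - K := by
    ext x
    rw [ContinuousLinearMap.mul_apply, ContinuousLinearMap.sub_apply,
      ContinuousLinearMap.one_apply]
    show (↑(R (P₂ₗ (Qs T q x))) : V) = x - K x
    rw [e2, hRQ]
    show (↑(P₂ₗ x) : V) = x - ↑(P₁ₗ x)
    exact hP₂sub x
  have hQS : Qs T q * S = 1 - K := by
    ext x
    rw [ContinuousLinearMap.mul_apply, ContinuousLinearMap.sub_apply,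
      ContinuousLinearMap.one_apply]
    show Qs T q ↑(R (P₂ₗ x)) = x - K x
    rw [hQcoe₂, hQR]
    show (↑(P₂ₗ x) : V) = x - ↑(P₁ₗ x)
    exact hP₂sub x
  intro hess
  exact hess ⟨S, K, K, hcompK, hcompK, hSQ, hQS⟩
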